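/- Let S be a ring with an injective ring endomorphism φ and a complete descending filtration by two-sided ideals I_1 ⊇ I_2 ⊇ ⋯ with ∩_k I_k = 0, S ≅ lim S/I_k, and φ(I_k) ⊆ I_{k+1} for all k. Let A be an invertible d×d matrix over S and B a d×d matrix with entries in I_1 such that A+B is invertible. Then there is a unique d×d matrix X with entries in I_1 satisfying φ(id + X)(A + B) = A(id + X), given by the convergent series X = Σ_{k≥0} A^{-1}φ(A^{-1})⋯φ^{k-1}(A^{-1})·φ^k(A^{-1}B)·φ^{k-1}(A+B)⋯φ(A+B)(A+B). -/

import Mathlib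

/-- Over a ring `S` with injective endomorphism `φ`, a complete separated descending filtration
by two-sided ideals `I_k` with `φ(I_k) ⊆ I_{k+1}`, and invertible matrices `A`, `A+B` with the
entries of `B` in `I_1`, there is a unique matrix `X` with entries in `I_1` satisfying
`φ(1+X)(A+B) = A(1+X)`, and it is the sum of the convergent series
`Σ_k A⁻¹φ(A⁻¹)⋯φ^{k-1}(A⁻¹)·φ^k(A⁻¹B)·φ^{k-1}(A+B)⋯φ(A+B)(A+B)`. -/
theorem stmt8 (S : Type*) [Ring S] (φ : S →+* S) (hφ : Function.Injective φ)
    (I : ℕ → TwoSidedIdeal S)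
    (hdesc : ∀ k, I (k + 1) ≤ I k)
    (hsep : ∀ s : S, (∀ k, s ∈ I k) → s = 0)
    (hcomplete : ∀ x : ℕ → S, (∀ k l, k ≤ l → x l - x k ∈ I k) →
      ∃ y : S, ∀ k, y - x k ∈ I k)
    (hφI : ∀ k, ∀ s ∈ I k, φ s ∈ I (k + 1))
    (d : ℕ) (A B : Matrix (Fin d) (Fin d) S)
    (hA : IsUnit A) (hB : ∀ i j, B i j ∈ I 1) (hAB : IsUnit (A + B)) :
    ∃ X : Matrix (Fin d) (Fin d) S,
      ((∀ i j, X i j ∈ I 1) ∧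
        (1 + X).map (⇑φ) * (A + B) = A * (1 + X) ∧
        ∀ n : ℕ, ∀ i j,
          (X - ∑ k ∈ Finset.range (n + 1),
            ((List.range k).map (fun j' => (Ring.inverse A).map ((⇑φ)^[j']))).prod *
              ((Ring.inverse A * B).map ((⇑φ)^[k])) *
              ((List.range k).reverse.map (fun j' => (A + B).map ((⇑φ)^[j']))).prod) i j
            ∈ I (n + 2)) ∧
      ∀ Y : Matrix (Fin d) (Fin d) S,
        (∀ i j, Y i j ∈ I 1) → (1 + Y).map (⇑φ) * (A + B) = A * (1 + Y) → Y = X := by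
  classical
  set C := Ring.inverse A with hCdef
  have hCA : C * A = 1 := Ring.inverse_mul_cancel _ hA
  have hAC : A * C = 1 := Ring.mul_inverse_cancel _ hA
  -- monotonicity of the filtration
  have hle : ∀ {m n : ℕ}, m ≤ n → I n ≤ I m := by
    intro m n h
    induction h with
    | refl => exact le_rfl
    | step _ ih => exact le_trans (hdesc _) (by assumption)
  -- products keep entries in an ideal
  have hmulL : ∀ (P Q : Matrix (Fin d) (Fin d) S) (n : ℕ),
      (∀ i j, Q i j ∈ I n) → ∀ i j, (P * Q) i j ∈ I n := by
    intro P Q n h i j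
    rw [Matrix.mul_apply]
    exact sum_mem fun l _ => (I n).mul_mem_left _ _ (h l j)
  have hmulR : ∀ (P Q : Matrix (Fin d) (Fin d) S) (n : ℕ),
      (∀ i j, P i j ∈ I n) → ∀ i j, (P * Q) i j ∈ I n := by
    intro P Q n h i j
    rw [Matrix.mul_apply]
    exact sum_mem fun l _ => (I n).mul_mem_right _ _ (h i l)
  -- the terms of the series
  set T : ℕ → Matrix (Fin d) (Fin d) S := fun k =>
    ((List.range k).map (fun j' => C.map ((⇑φ)^[j']))).prod *
      ((C * B).map ((⇑φ)^[k])) *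
      ((List.range k).reverse.map (fun j' => (A + B).map ((⇑φ)^[j']))).prod with hTdef
  have key : ∀ M : Matrix (Fin d) (Fin d) S,
      ((fun j' => M.map ((⇑φ)^[j'])) ∘ Nat.succ)
        = ⇑φ.mapMatrix ∘ (fun j' => M.map ((⇑φ)^[j'])) := by
    intro M; funext j
    simp [Function.comp, Matrix.map_map, ← Function.iterate_succ']
  have hLrec : ∀ k, ((List.range (k+1)).map (fun j' => C.map ((⇑φ)^[j']))).prod
      = C * (((List.range k).map (fun j' => C.map ((⇑φ)^[j']))).prod).map ⇑φ := by
    intro k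
    rw [List.range_succ_eq_map, List.map_cons, List.prod_cons, List.map_map, key,
      ← List.map_map, ← map_list_prod]
    simp
  have hRrec : ∀ k, ((List.range (k+1)).reverse.map (fun j' => (A+B).map ((⇑φ)^[j']))).prod
      = ((((List.range k).reverse.map (fun j' => (A+B).map ((⇑φ)^[j']))).prod).map ⇑φ) * (A+B) := by
    intro k
    rw [List.range_succ_eq_map, List.reverse_cons, List.map_append, List.prod_append,
      ← List.map_reverse, List.map_map, key, ← List.map_map, ← map_list_prod]
    simp
  have hmrec : ∀ k, (C * B).map ((⇑φ)^[k+1]) = ((C * B).map ((⇑φ)^[k])).map ⇑φ := by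
    intro k
    rw [Matrix.map_map, ← Function.iterate_succ']
  -- recurrence for the terms
  have hTrec : ∀ k, T (k + 1) = C * (T k).map ⇑φ * (A + B) := by
    intro k
    rw [hTdef]
    simp only
    rw [hLrec, hmrec, hRrec, Matrix.map_mul, Matrix.map_mul]
    simp only [mul_assoc]
  -- entries of T k lie in I (k+1)
  have hCB : ∀ i j, (C * B) i j ∈ I 1 := hmulL C B 1 hB
  have hTmem : ∀ k i j, T k i j ∈ I (k + 1) := by
    intro k
    have hmid : ∀ i j, ((C * B).map ((⇑φ)^[k])) i j ∈ I (k + 1) := by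
      induction k with
      | zero => simpa using hCB
      | succ n ih =>
        intro i j
        rw [hmrec]
        exact hφI _ _ (ih i j)
    exact hmulR _ _ _ (hmulL _ _ _ hmid)
  -- partial sums
  set s : ℕ → Matrix (Fin d) (Fin d) S := fun m => ∑ k ∈ Finset.range m, T k with hsdef
  have hsdiff : ∀ m₁ m₂, m₁ ≤ m₂ → ∀ i j, (s m₂ - s m₁) i j ∈ I (m₁ + 1) := by
    intro m₁ m₂ h i j
    rw [hsdef]
    simp only
    rw [← Finset.sum_Ico_eq_sub _ h]
    rw [Matrix.sum_apply]
    refine sum_mem fun k hk => ?_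
    rw [Finset.mem_Ico] at hk
    exact hle (Nat.succ_le_succ hk.1) (hTmem k i j)
  -- completeness gives the limit entrywise
  have hex : ∀ i j, ∃ y : S, ∀ m, y - s m i j ∈ I m := by
    intro i j
    refine hcomplete (fun m => s m i j) fun k l hkl => ?_
    have := hsdiff k l hkl i j
    rw [Matrix.sub_apply] at this
    exact hle (Nat.le_succ k) this
  choose Xf hXf using fun i => hex i
  set X : Matrix (Fin d) (Fin d) S := Matrix.of (fun i j => Xf i j) with hXdef
  have hXs : ∀ m i j, (X - s m) i j ∈ I m := by
    intro m i j
    rw [Matrix.sub_apply]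
    exact hXf i j m
  -- sharper estimate : X - s (n+1) ∈ I (n+2)
  have hXs' : ∀ n i j, (X - s (n + 1)) i j ∈ I (n + 2) := by
    intro n i j
    have h1 := hXs (n + 2) i j
    have h2 := hsdiff (n + 1) (n + 2) (Nat.le_succ _) i j
    have : (X - s (n + 1)) i j = (X - s (n + 2)) i j + (s (n + 2) - s (n + 1)) i j := by
      simp [Matrix.sub_apply]
    rw [this]
    exact (I (n + 2)).add_mem h1 h2
  -- entries of X in I 1
  have hXmem : ∀ i j, X i j ∈ I 1 := by
    intro i j
    have h1 := hXs 1 i j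
    have hs1 : s 1 = T 0 := by rw [hsdef]; simp
    have h2 : s 1 i j ∈ I 1 := by rw [hs1]; exact hTmem 0 i j
    have : X i j = (X - s 1) i j + s 1 i j := by simp [Matrix.sub_apply]
    rw [this]
    exact (I 1).add_mem h1 h2
  -- recurrence for partial sums : s (m+1) = C*B + C * (s m).map φ * (A+B)
  have hsrec : ∀ m, s (m + 1) = C * B + C * (s m).map ⇑φ * (A + B) := by
    intro m
    rw [hsdef]
    simp only
    rw [Finset.sum_range_succ' (fun k => T k)]
    have hT0 : T 0 = C * B := by rw [hTdef]; simp
    rw [hT0]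
    rw [add_comm]
    congr 1
    rw [← RingHom.mapMatrix_apply, map_sum, Finset.mul_sum, Finset.sum_mul]
    exact Finset.sum_congr rfl fun k _ => by
      rw [hTrec k, RingHom.mapMatrix_apply]
  -- the functional equation in the form A * X = B + X.map φ * (A + B)
  have hmid : ∀ m, A * s (m + 1) = B + (s m).map ⇑φ * (A + B) := by
    intro m
    rw [hsrec m]
    calc A * (C * B + C * (s m).map ⇑φ * (A + B))
        = (A * C) * B + (A * C) * ((s m).map ⇑φ * (A + B)) := by noncomm_ring
      _ = B + (s m).map ⇑φ * (A + B) := by rw [hAC, one_mul, one_mul]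
  have hfun : A * X = B + X.map ⇑φ * (A + B) := by
    have hall : ∀ i j, (A * X - (B + X.map ⇑φ * (A + B))) i j = 0 := by
      intro i j
      refine hsep _ fun n => ?_
      have hm : ∀ m, (A * X - (B + X.map ⇑φ * (A + B))) i j ∈ I (m + 1) := by
        intro m
        have hEeq : A * X - (B + X.map ⇑φ * (A + B))
            = A * (X - s (m + 1)) + ((s m - X).map ⇑φ) * (A + B) := by
          rw [Matrix.map_sub _ (fun a b => map_sub φ a b), mul_sub, sub_mul, hmid]
          abel
        rw [hEeq, Matrix.add_apply]
        refine (I (m + 1)).add_mem ?_ ?_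
        · exact hle (Nat.le_succ _) (hmulL _ _ _ (hXs' m) i j)
        · refine hmulR _ _ _ (fun i j => ?_) i j
          rw [Matrix.map_apply]
          have : (s m - X) i j ∈ I m := by
            have := hXs m i j
            have h' := (I m).neg_mem this
            simpa [Matrix.sub_apply, neg_sub] using h'
          exact hφI _ _ this
      match n with
      | 0 => exact hle (Nat.zero_le 1) (hm 0)
      | (n + 1) => exact hm n
    have hz : A * X - (B + X.map ⇑φ * (A + B)) = 0 := by
      ext i j
      rw [Matrix.zero_apply]
      exact hall i j
    exact sub_eq_zero.mp hz
  -- the stated functional equation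
  have hmap1 : ∀ M : Matrix (Fin d) (Fin d) S, (1 + M).map ⇑φ = 1 + M.map ⇑φ := by
    intro M
    rw [Matrix.map_add _ (fun a b => map_add φ a b), Matrix.map_one _ (map_zero φ) (map_one φ)]
  have hfun' : X.map ⇑φ * (A + B) = A * X - B := by rw [hfun]; abel
  have hXeq : (1 + X).map ⇑φ * (A + B) = A * (1 + X) := by
    rw [hmap1]
    calc (1 + X.map ⇑φ) * (A + B) = (A + B) + X.map ⇑φ * (A + B) := by noncomm_ring
      _ = (A + B) + (A * X - B) := by rw [hfun']
      _ = A * (1 + X) := by noncomm_ring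
  refine ⟨X, ⟨hXmem, hXeq, fun n i j => ?_⟩, fun Y hY1 hY2 => ?_⟩
  · exact hXs' n i j
  · -- uniqueness
    have hY3 : A * Y = B + Y.map ⇑φ * (A + B) := by
      rw [hmap1] at hY2
      calc A * Y = A * (1 + Y) - A := by noncomm_ring
        _ = (1 + Y.map ⇑φ) * (A + B) - A := by rw [hY2]
        _ = B + Y.map ⇑φ * (A + B) := by noncomm_ring
    have hADX : A * (Y - X) = (Y - X).map ⇑φ * (A + B) := by
      rw [Matrix.map_sub _ (fun a b => map_sub φ a b), mul_sub, sub_mul, hY3, hfun]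
      abel
    have hDrec : Y - X = C * ((Y - X).map ⇑φ * (A + B)) := by
      calc Y - X = (C * A) * (Y - X) := by rw [hCA, one_mul]
        _ = C * (A * (Y - X)) := by rw [mul_assoc]
        _ = C * ((Y - X).map ⇑φ * (A + B)) := by rw [hADX]
    have hD : ∀ n : ℕ, ∀ i j, (Y - X) i j ∈ I (n + 1) := by
      intro n
      induction n with
      | zero =>
        intro i j
        rw [Matrix.sub_apply]
        exact (I 1).sub_mem (hY1 i j) (hXmem i j)
      | succ n ih =>
        intro i j
        rw [hDrec]
        refine hmulL _ _ _ (hmulR _ _ _ (fun i j => ?_)) i j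
        rw [Matrix.map_apply]
        exact hφI _ _ (ih i j)
    have hD0 : Y - X = 0 := by
      ext i j
      rw [Matrix.zero_apply]
      refine hsep _ fun k => ?_
      match k with
      | 0 => exact hle (Nat.zero_le 1) (hD 0 i j)
      | (k + 1) => exact hD k i j
    exact sub_eq_zero.mp hD0
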